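/- Let D = X·B ∈ 𝔽₂[[X]] where B is the generating series of the Baum–Sweet sequence, and let Q = Σ q_n X^n be the compositional inverse of D. Then q_{4n} = q_{4n+3} = 0 and q_{4n+1} = q_{4n+2} = q_{n+1} for all n ∈ ℕ, and q_1 = 1. -/

import Mathlib

open PowerSeries

/-- `SubstEq f a h` says that substituting the power series `a` (with zero constant term)
for `X` in `f` yields `h`: for each `n`, the `n`-th coefficient of the truncated
composition `Σ_{k ≤ n} f_k a^k` equals the `n`-th coefficient of `h`. -/
def SubstEq (f a h : PowerSeries (ZMod 2)) : Prop :=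
  ∀ n : ℕ, (PowerSeries.coeff (R := ZMod 2) n)
      (∑ k ∈ Finset.range (n + 1), PowerSeries.C (R := ZMod 2) ((PowerSeries.coeff (R := ZMod 2) k) f) * a ^ k)
    = (PowerSeries.coeff (R := ZMod 2) n) h

namespace BSAux

/-- In a power series with zero constant term, low coefficients of powers vanish. -/
lemma coeff_pow_of_lt {a : PowerSeries (ZMod 2)} (ha : constantCoeff (R := ZMod 2) a = 0)
    {k n : ℕ} (h : n < k) : coeff (R := ZMod 2) n (a ^ k) = 0 := by
  have hd : (X : PowerSeries (ZMod 2)) ^ k ∣ a ^ k :=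
    pow_dvd_pow_of_dvd (X_dvd_iff.mpr ha) k
  exact (X_pow_dvd_iff.mp hd) n h

/-- Evaluating a polynomial whose low coefficients vanish at a power series with zero
constant term produces a series with vanishing low coefficients. -/
lemma coeff_eval₂_of_lt {a : PowerSeries (ZMod 2)} (ha : constantCoeff (R := ZMod 2) a = 0)
    {p : Polynomial (ZMod 2)} {N n : ℕ} (hp : ∀ k, k < N → p.coeff k = 0) (hn : n < N) :
    coeff (R := ZMod 2) n (p.eval₂ (C (R := ZMod 2)) a) = 0 := by
  rw [Polynomial.eval₂_eq_sum, Polynomial.sum, map_sum]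
  refine Finset.sum_eq_zero fun k hk => ?_
  have hk' : ¬ k < N := fun h => Polynomial.mem_support_iff.mp hk (hp k h)
  rw [coeff_C_mul, coeff_pow_of_lt ha (lt_of_lt_of_le hn (le_of_not_gt hk')), mul_zero]

/-- Composition of power series, defined coefficientwise via truncations. -/
noncomputable def comp (f a : PowerSeries (ZMod 2)) : PowerSeries (ZMod 2) :=
  PowerSeries.mk fun n => coeff (R := ZMod 2) n ((trunc (n + 1) f).eval₂ (C (R := ZMod 2)) a)

lemma coeff_comp {a : PowerSeries (ZMod 2)} (ha : constantCoeff (R := ZMod 2) a = 0)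
    (f : PowerSeries (ZMod 2)) {n N : ℕ} (h : n < N) :
    coeff (R := ZMod 2) n (comp f a) = coeff (R := ZMod 2) n ((trunc N f).eval₂ (C (R := ZMod 2)) a) := by
  rw [comp, coeff_mk]
  have key : trunc N f = trunc (n + 1) f + (trunc N f - trunc (n + 1) f) := by ring
  have hdiff : ∀ k, k < n + 1 → (trunc N f - trunc (n + 1) f).coeff k = 0 := by
    intro k hk
    rw [Polynomial.coeff_sub, coeff_trunc, coeff_trunc, if_pos (by omega), if_pos hk, sub_self]
  rw [key, Polynomial.eval₂_add, map_add,
    coeff_eval₂_of_lt ha hdiff (Nat.lt_succ_self n), add_zero]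

lemma sum_eq_eval₂ (f a : PowerSeries (ZMod 2)) (n : ℕ) :
    (∑ k ∈ Finset.range (n + 1), C (R := ZMod 2) (coeff (R := ZMod 2) k f) * a ^ k)
      = (trunc (n + 1) f).eval₂ (C (R := ZMod 2)) a := by
  rw [trunc_apply, Polynomial.eval₂_finset_sum, ← Finset.range_eq_Ico]
  exact Finset.sum_congr rfl fun k _ => by rw [Polynomial.eval₂_monomial]

lemma substEq_iff {f a h : PowerSeries (ZMod 2)} : SubstEq f a h ↔ comp f a = h := by
  have e : ∀ n, coeff (R := ZMod 2) n (comp f a) =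
      coeff (R := ZMod 2) n
        (∑ k ∈ Finset.range (n + 1), C (R := ZMod 2) (coeff (R := ZMod 2) k f) * a ^ k) := by
    intro n; rw [comp, coeff_mk, sum_eq_eval₂]
  constructor
  · intro H; ext n; rw [e n]; exact H n
  · intro H n; rw [← e n, H]

lemma comp_add (f g a : PowerSeries (ZMod 2)) :
    comp (f + g) a = comp f a + comp g a := by
  ext n
  simp only [comp, coeff_mk, map_add, Polynomial.eval₂_add, map_add]

lemma comp_one (a : PowerSeries (ZMod 2)) : comp 1 a = 1 := by
  ext n
  rw [comp, coeff_mk, trunc_one, Polynomial.eval₂_one]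

lemma comp_X {a : PowerSeries (ZMod 2)} (ha : constantCoeff (R := ZMod 2) a = 0) :
    comp X a = a := by
  ext n
  rw [comp, coeff_mk]
  match n with
  | 0 =>
    have h1 : trunc 1 (X : PowerSeries (ZMod 2)) = 0 := by
      ext k
      rw [coeff_trunc]
      split
      · next hk =>
        interval_cases k
        simp [coeff_X]
      · simp
    rw [h1, Polynomial.eval₂_zero, map_zero, coeff_zero_eq_constantCoeff_apply, ha]
  | (m + 1) =>
    rw [show m + 1 + 1 = m + 2 from rfl, trunc_X, Polynomial.eval₂_X]

lemma comp_mul {a : PowerSeries (ZMod 2)} (ha : constantCoeff (R := ZMod 2) a = 0)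
    (f g : PowerSeries (ZMod 2)) :
    comp (f * g) a = comp f a * comp g a := by
  ext n
  set tf := trunc (n + 1) f with htf
  set tg := trunc (n + 1) g with htg
  have h1 : ∀ k, k < n + 1 → (tf * tg - trunc (n + 1) (f * g)).coeff k = 0 := by
    intro k hk
    rw [Polynomial.coeff_sub, coeff_trunc, if_pos hk, Polynomial.coeff_mul,
      PowerSeries.coeff_mul, sub_eq_zero]
    refine Finset.sum_congr rfl fun p hp => ?_
    have hmem := Finset.HasAntidiagonal.mem_antidiagonal.mp hp
    rw [htf, htg, coeff_trunc, coeff_trunc, if_pos (by omega), if_pos (by omega)]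
  calc coeff (R := ZMod 2) n (comp (f * g) a)
      = coeff (R := ZMod 2) n ((trunc (n + 1) (f * g)).eval₂ (C (R := ZMod 2)) a) :=
        coeff_comp ha _ (Nat.lt_succ_self n)
    _ = coeff (R := ZMod 2) n ((tf * tg).eval₂ (C (R := ZMod 2)) a) := by
        have e : tf * tg = trunc (n + 1) (f * g) + (tf * tg - trunc (n + 1) (f * g)) := by ring
        rw [e, Polynomial.eval₂_add, map_add,
          coeff_eval₂_of_lt ha h1 (Nat.lt_succ_self n), add_zero]
    _ = coeff (R := ZMod 2) n (tf.eval₂ (C (R := ZMod 2)) a * tg.eval₂ (C (R := ZMod 2)) a) := by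
        rw [Polynomial.eval₂_mul]
    _ = ∑ p ∈ Finset.HasAntidiagonal.antidiagonal n,
          coeff (R := ZMod 2) p.1 (tf.eval₂ (C (R := ZMod 2)) a) *
            coeff (R := ZMod 2) p.2 (tg.eval₂ (C (R := ZMod 2)) a) := PowerSeries.coeff_mul _ _ _
    _ = ∑ p ∈ Finset.HasAntidiagonal.antidiagonal n,
          coeff (R := ZMod 2) p.1 (comp f a) * coeff (R := ZMod 2) p.2 (comp g a) := by
        refine Finset.sum_congr rfl fun p hp => ?_
        have hmem := Finset.HasAntidiagonal.mem_antidiagonal.mp hp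
        rw [coeff_comp ha f (show p.1 < n + 1 by omega),
          coeff_comp ha g (show p.2 < n + 1 by omega)]
    _ = coeff (R := ZMod 2) n (comp f a * comp g a) := (PowerSeries.coeff_mul _ _ _).symm

lemma comp_pow {a : PowerSeries (ZMod 2)} (ha : constantCoeff (R := ZMod 2) a = 0)
    (f : PowerSeries (ZMod 2)) (k : ℕ) :
    comp (f ^ k) a = (comp f a) ^ k := by
  induction k with
  | zero => simpa using comp_one a
  | succ m ih => rw [pow_succ, comp_mul ha, ih, pow_succ]

/-- Odd coefficients of a square vanish over `ZMod 2`. -/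
lemma coeff_sq_odd (f : PowerSeries (ZMod 2)) (n : ℕ) :
    coeff (R := ZMod 2) (2 * n + 1) (f ^ 2) = 0 := by
  rw [pow_two, PowerSeries.coeff_mul]
  refine Finset.sum_involution (fun p _ => (p.2, p.1)) ?_ ?_ ?_ ?_
  · intro p _
    dsimp only
    rw [mul_comm]
    exact CharTwo.add_self_eq_zero _
  · intro p hp _
    have hmem := Finset.HasAntidiagonal.mem_antidiagonal.mp hp
    intro heq
    have h1 : p.2 = p.1 := by
      have := congrArg Prod.fst heq
      simpa using this
    omega
  · intro p hp
    have hmem := Finset.HasAntidiagonal.mem_antidiagonal.mp hp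
    refine Finset.HasAntidiagonal.mem_antidiagonal.mpr ?_
    dsimp only
    omega
  · intro p _
    rfl

/-- Even coefficients of a square over `ZMod 2`. -/
lemma coeff_sq_even (f : PowerSeries (ZMod 2)) (n : ℕ) :
    coeff (R := ZMod 2) (2 * n) (f ^ 2) = coeff (R := ZMod 2) n f := by
  rw [pow_two, PowerSeries.coeff_mul]
  have hmem : ((n, n) : ℕ × ℕ) ∈ Finset.HasAntidiagonal.antidiagonal (2 * n) :=
    Finset.HasAntidiagonal.mem_antidiagonal.mpr (by omega)
  rw [← Finset.add_sum_erase _ _ hmem]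
  have h0 : ∑ p ∈ (Finset.HasAntidiagonal.antidiagonal (2 * n)).erase (n, n),
      coeff (R := ZMod 2) p.1 f * coeff (R := ZMod 2) p.2 f = 0 := by
    refine Finset.sum_involution (fun p _ => (p.2, p.1)) ?_ ?_ ?_ ?_
    · intro p _
      dsimp only
      rw [mul_comm]
      exact CharTwo.add_self_eq_zero _
    · intro p hp _
      obtain ⟨hne, hmem'⟩ := Finset.mem_erase.mp hp
      have hsum := Finset.HasAntidiagonal.mem_antidiagonal.mp hmem'
      intro heq
      have h1 : p.2 = p.1 := by
        have := congrArg Prod.fst heq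
        simpa using this
      apply hne
      have : p.1 = n := by omega
      have h2 : p.2 = n := by omega
      exact Prod.ext this h2
    · intro p hp
      obtain ⟨hne, hmem'⟩ := Finset.mem_erase.mp hp
      have hsum := Finset.HasAntidiagonal.mem_antidiagonal.mp hmem'
      refine Finset.mem_erase.mpr ⟨?_, Finset.HasAntidiagonal.mem_antidiagonal.mpr (by dsimp only; omega)⟩
      intro heq
      apply hne
      have h1 : p.2 = n := by
        have := congrArg Prod.fst heq
        simpa using this
      have h2 : p.1 = n := by
        have := congrArg Prod.snd heq
        simpa using this
      exact Prod.ext h2 h1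
    · intro p _
      rfl
  rw [h0, add_zero]
  have hx : ∀ x : ZMod 2, x * x = x := by decide
  exact hx _

lemma sq_sq (f : PowerSeries (ZMod 2)) : f ^ 4 = (f ^ 2) ^ 2 := by ring

lemma coeff_pow4_zero (f : PowerSeries (ZMod 2)) (m : ℕ) :
    coeff (R := ZMod 2) (4 * m) (f ^ 4) = coeff (R := ZMod 2) m f := by
  rw [sq_sq, show 4 * m = 2 * (2 * m) by ring, coeff_sq_even, coeff_sq_even]

lemma coeff_pow4_one (f : PowerSeries (ZMod 2)) (m : ℕ) :
    coeff (R := ZMod 2) (4 * m + 1) (f ^ 4) = 0 := by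
  rw [sq_sq, show 4 * m + 1 = 2 * (2 * m) + 1 by ring, coeff_sq_odd]

lemma coeff_pow4_two (f : PowerSeries (ZMod 2)) (m : ℕ) :
    coeff (R := ZMod 2) (4 * m + 2) (f ^ 4) = 0 := by
  rw [sq_sq, show 4 * m + 2 = 2 * (2 * m + 1) by ring, coeff_sq_even, coeff_sq_odd]

lemma coeff_pow4_three (f : PowerSeries (ZMod 2)) (m : ℕ) :
    coeff (R := ZMod 2) (4 * m + 3) (f ^ 4) = 0 := by
  rw [sq_sq, show 4 * m + 3 = 2 * (2 * m + 1) + 1 by ring, coeff_sq_odd]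

lemma add_self (g : PowerSeries (ZMod 2)) : g + g = 0 := by
  ext m
  rw [map_add, map_zero, CharTwo.add_self_eq_zero]

end BSAux

open BSAux

/-- Let `B ∈ 𝔽₂[[X]]` be the generating series of the Baum–Sweet sequence, `D = X·B`,
and `Q = Σ q_n X^n` the compositional inverse of `D`. Then `q_{4n} = q_{4n+3} = 0`,
`q_{4n+1} = q_{4n+2} = q_{n+1}` for all `n`, and `q_1 = 1`. -/
theorem baumSweet_variant_two_formal_inverse_recurrences
    (b : ℕ → ZMod 2) (h0 : b 0 = 1)
    (h1 : ∀ n, b (2 * n + 1) = b n)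
    (h2 : ∀ n, b (4 * n) = b n)
    (h3 : ∀ n, b (4 * n + 2) = 0)
    (Q : PowerSeries (ZMod 2))
    (hQ0 : PowerSeries.constantCoeff (R := ZMod 2) Q = 0)
    (hDQ : SubstEq (PowerSeries.X * PowerSeries.mk b) Q PowerSeries.X)
    (hQD : SubstEq Q (PowerSeries.X * PowerSeries.mk b) PowerSeries.X) :
    (∀ n : ℕ, (PowerSeries.coeff (R := ZMod 2) (4 * n)) Q = 0
      ∧ (PowerSeries.coeff (R := ZMod 2) (4 * n + 3)) Q = 0
      ∧ (PowerSeries.coeff (R := ZMod 2) (4 * n + 1)) Q = (PowerSeries.coeff (R := ZMod 2) (n + 1)) Q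
      ∧ (PowerSeries.coeff (R := ZMod 2) (4 * n + 2)) Q = (PowerSeries.coeff (R := ZMod 2) (n + 1)) Q)
    ∧ (PowerSeries.coeff (R := ZMod 2) 1) Q = 1 := by
  set B : PowerSeries (ZMod 2) := PowerSeries.mk b with hB
  -- Step 1: the algebraic relation for B
  have Brel : B = B ^ 4 + X * B ^ 2 := by
    ext n
    obtain ⟨k, hk⟩ : ∃ k, n = 4 * k ∨ n = 4 * k + 1 ∨ n = 4 * k + 2 ∨ n = 4 * k + 3 :=
      ⟨n / 4, by omega⟩
    have hBm : ∀ m, coeff (R := ZMod 2) m B = b m := fun m => coeff_mk m b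
    rcases hk with rfl | rfl | rfl | rfl
    · rcases Nat.eq_zero_or_pos k with rfl | hkpos
      · rw [map_add, show 4 * 0 = 4 * 0 from rfl, coeff_pow4_zero,
          show (4 * 0 : ℕ) = 0 from rfl, PowerSeries.coeff_zero_X_mul, add_zero]
      · obtain ⟨j, rfl⟩ : ∃ j, k = j + 1 := ⟨k - 1, by omega⟩
        rw [map_add, coeff_pow4_zero,
          show 4 * (j + 1) = (2 * (2 * j + 1) + 1) + 1 by ring, coeff_succ_X_mul,
          coeff_sq_odd, add_zero, hBm, hBm,
          show (2 * (2 * j + 1) + 1) + 1 = 4 * (j + 1) by ring, h2]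
    · rw [map_add, coeff_pow4_one, zero_add,
        show 4 * k + 1 = (2 * (2 * k)) + 1 by ring, coeff_succ_X_mul, coeff_sq_even,
        hBm, hBm, show 2 * (2 * k) + 1 = 2 * (2 * k) + 1 from rfl, h1]
    · rw [map_add, coeff_pow4_two, zero_add,
        show 4 * k + 2 = (2 * (2 * k) + 1) + 1 by ring, coeff_succ_X_mul, coeff_sq_odd,
        hBm, show (2 * (2 * k) + 1) + 1 = 4 * k + 2 by ring, h3]
    · rw [map_add, coeff_pow4_three, zero_add,
        show 4 * k + 3 = (2 * (2 * k + 1)) + 1 by ring, coeff_succ_X_mul, coeff_sq_even,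
        hBm, hBm, show 2 * (2 * k + 1) + 1 = 2 * (2 * k + 1) + 1 from rfl, h1]
  obtain ⟨D, hD⟩ : ∃ D : PowerSeries (ZMod 2), D = X * B := ⟨_, rfl⟩
  rw [← hD] at hDQ
  -- Step 2: the algebraic relation for D
  have Drel : D ^ 4 = X ^ 3 * D + X ^ 3 * D ^ 2 := by
    have e1 : D ^ 4 + (X ^ 3 * D + X ^ 3 * D ^ 2)
        = X ^ 4 * (B ^ 4 + X * B ^ 2) + X ^ 4 * B := by
      rw [hD]; ring
    rw [← Brel, add_self] at e1
    linear_combination e1 - add_self (X ^ 3 * D + X ^ 3 * D ^ 2)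
  -- Step 3: substitute Q
  have hCDQ : comp D Q = X := substEq_iff.mp hDQ
  have main : (X : PowerSeries (ZMod 2)) ^ 4 = Q ^ 3 * X + Q ^ 3 * X ^ 2 := by
    have h4 : comp (D ^ 4) Q = comp (X ^ 3 * D) Q + comp (X ^ 3 * D ^ 2) Q := by
      rw [← comp_add, ← Drel]
    have e2 : comp (D ^ 4) Q = X ^ 4 := by rw [comp_pow hQ0, hCDQ]
    have e3 : comp (X ^ 3 * D) Q = Q ^ 3 * X := by
      rw [comp_mul hQ0, hCDQ, comp_pow hQ0, comp_X hQ0]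
    have e4 : comp (X ^ 3 * D ^ 2) Q = Q ^ 3 * X ^ 2 := by
      rw [comp_mul hQ0, comp_pow hQ0, comp_pow hQ0, hCDQ, comp_X hQ0]
    rw [e2, e3, e4] at h4
    exact h4
  -- Step 4: the key functional equation for Q
  have key : X ^ 3 * Q = Q ^ 4 + X * Q ^ 4 := by
    have hXne : (X : PowerSeries (ZMod 2)) ≠ 0 := X_ne_zero
    apply mul_left_cancel₀ hXne
    calc X * (X ^ 3 * Q) = X ^ 4 * Q := by ring
      _ = (Q ^ 3 * X + Q ^ 3 * X ^ 2) * Q := by rw [main]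
      _ = X * (Q ^ 4 + X * Q ^ 4) := by ring
  have hco : ∀ m, coeff (R := ZMod 2) m (X ^ 3 * Q)
      = coeff (R := ZMod 2) m (Q ^ 4) + coeff (R := ZMod 2) m (X * Q ^ 4) := by
    intro m
    rw [key, map_add]
  -- Step 5: extract coefficients
  refine ⟨fun n => ⟨?_, ?_, ?_, ?_⟩, ?_⟩
  · -- q_{4n} = 0
    rcases Nat.eq_zero_or_pos n with rfl | hpos
    · rw [show 4 * 0 = 0 from rfl, coeff_zero_eq_constantCoeff_apply, hQ0]
    · obtain ⟨j, rfl⟩ : ∃ j, n = j + 1 := ⟨n - 1, by omega⟩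
      have h := hco (4 * j + 7)
      rw [show 4 * j + 7 = (4 * (j + 1)) + 3 by ring, coeff_X_pow_mul,
        show 4 * (j + 1) + 3 = 4 * (j + 1) + 3 from rfl, coeff_pow4_three,
        show 4 * (j + 1) + 3 = (4 * (j + 1) + 2) + 1 by ring, coeff_succ_X_mul,
        coeff_pow4_two, add_zero] at h
      exact h
  · -- q_{4n+3} = 0
    have h := hco (4 * n + 6)
    rw [show 4 * n + 6 = (4 * n + 3) + 3 by ring, coeff_X_pow_mul,
      show (4 * n + 3) + 3 = 4 * (n + 1) + 2 by ring, coeff_pow4_two,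
      show 4 * (n + 1) + 2 = (4 * (n + 1) + 1) + 1 by ring, coeff_succ_X_mul,
      coeff_pow4_one, add_zero] at h
    exact h
  · -- q_{4n+1} = q_{n+1}
    have h := hco (4 * n + 4)
    rw [show 4 * n + 4 = (4 * n + 1) + 3 by ring, coeff_X_pow_mul,
      show (4 * n + 1) + 3 = 4 * (n + 1) by ring, coeff_pow4_zero,
      show 4 * (n + 1) = (4 * n + 3) + 1 by ring, coeff_succ_X_mul,
      coeff_pow4_three, add_zero] at h
    exact h
  · -- q_{4n+2} = q_{n+1}
    have h := hco (4 * n + 5)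
    rw [show 4 * n + 5 = (4 * n + 2) + 3 by ring, coeff_X_pow_mul,
      show (4 * n + 2) + 3 = 4 * (n + 1) + 1 by ring, coeff_pow4_one,
      show 4 * (n + 1) + 1 = (4 * (n + 1)) + 1 by ring, coeff_succ_X_mul,
      coeff_pow4_zero, zero_add] at h
    exact h
  · -- q_1 = 1
    have hq1 := hDQ 1
    have c0 : coeff (R := ZMod 2) 0 D = 0 := by
      rw [hD]; exact PowerSeries.coeff_zero_X_mul _
    have c1 : coeff (R := ZMod 2) 1 D = 1 := by
      rw [hD, hB, show (1 : ℕ) = 0 + 1 from rfl, coeff_succ_X_mul, coeff_mk, h0]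
    rw [Finset.sum_range_succ, Finset.sum_range_one, pow_zero, pow_one, mul_one,
      c0, c1, map_zero, map_one, one_mul, zero_add, coeff_X, if_pos rfl] at hq1
    exact hq1
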